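/- (Inf-convolution regularization) Let g : [0,T]×ℝ×ℝ^n → ℝ be continuous in (y,z) with -（l_t + c_t|y| + q_p(z)） ≤ g(t,y,z) ≤ l_t + c_t|y| + (1/2)|z|², where q_p(z) = (1/2)|z|² for |z| ≤ p and p|z| - p²/2 for |z| > p, and l, c bounded by C̄. Define g_n(t,y,z) = inf_{u,w} (g(t,u,w) + n|y-u| + n|z-w|). Then for n ≥ max(C̄, p): (i) g_n is n-Lipschitz in (y,z); (ii) |g_n(t,y,z)| ≤ l_t + c_t|y| + max(q_p(z), q_n(z)) ≤ l_t + c_t|y| + (1/2)|z|²; (iii) the sequence (g_n) is nondecreasing in n; (iv) if (y_k, z_k) → (y,z) then g_{n_k}(t, y_k, z_k) → g(t,y,z) along any sequence n_k → ∞ (stability of the approximation). -/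

import Mathlib

open Filter

/-- The truncated quadratic function `q_p(z) = |z|²/2` for `|z| ≤ p`,
`p|z| - p²/2` for `|z| > p`. -/
noncomputable def qcap {E : Type*} [NormedAddCommGroup E] (p : ℝ) (z : E) : ℝ :=
  if ‖z‖ ≤ p then ‖z‖ ^ 2 / 2 else p * ‖z‖ - p ^ 2 / 2

/-- The inf-convolution `g_n(t,y,z) = inf_{u,w} (g(t,u,w) + n|y-u| + n‖z-w‖)`. -/
noncomputable def infConvReg {E : Type*} [NormedAddCommGroup E]
    (g : ℝ → ℝ → E → ℝ) (n : ℝ) (t y : ℝ) (z : E) : ℝ :=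
  ⨅ uw : ℝ × E, (g t uw.1 uw.2 + n * |y - uw.1| + n * ‖z - uw.2‖)

section auxIC
variable {E : Type*} [NormedAddCommGroup E] [NormedSpace ℝ E]

set_option linter.unusedSectionVars false

lemma qcap_nonneg {p : ℝ} (hp : 0 ≤ p) (z : E) : 0 ≤ qcap p z := by
  unfold qcap; split_ifs with h
  · positivity
  · push_neg at h
    nlinarith [mul_nonneg hp hp, mul_nonneg hp (show (0:ℝ) ≤ ‖z‖ - p by linarith)]

lemma qcap_le_half_sq {p : ℝ} (hp : 0 ≤ p) (z : E) : qcap p z ≤ ‖z‖ ^ 2 / 2 := by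
  unfold qcap; split_ifs with h
  · exact le_rfl
  · nlinarith [sq_nonneg (‖z‖ - p)]

lemma qcap_le_mul {p : ℝ} (hp : 0 ≤ p) (z : E) : qcap p z ≤ p * ‖z‖ := by
  unfold qcap; split_ifs with h
  · nlinarith [mul_nonneg (norm_nonneg z) (show (0:ℝ) ≤ p - ‖z‖/2 by
      have := norm_nonneg z; linarith)]
  · nlinarith [sq_nonneg p]

lemma qcap_lip {p : ℝ} (hp : 0 ≤ p) (z w : E) : qcap p z ≤ qcap p w + p * ‖z - w‖ := by
  have hb : ‖z‖ ≤ ‖w‖ + ‖z - w‖ := by have := norm_sub_norm_le z w; linarith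
  have hz := norm_nonneg z; have hw := norm_nonneg w; have hs := norm_nonneg (z - w)
  unfold qcap
  rcases le_or_gt ‖z‖ p with h1 | h1 <;> rcases le_or_gt ‖w‖ p with h2 | h2
  · rw [if_pos h1, if_pos h2]
    nlinarith [mul_nonneg hs (show (0:ℝ) ≤ 2*p - ‖z‖ - ‖w‖ by linarith),
      mul_nonneg (show (0:ℝ) ≤ ‖z - w‖ - (‖z‖ - ‖w‖) by linarith)
        (show (0:ℝ) ≤ ‖z‖ + ‖w‖ by linarith)]
  · rw [if_pos h1, if_neg (not_le.2 h2)]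
    nlinarith [mul_nonneg hp hs, mul_nonneg hp (show (0:ℝ) ≤ ‖w‖ - p by linarith),
      sq_nonneg (p - ‖z‖)]
  · rw [if_neg (not_le.2 h1), if_pos h2]
    nlinarith [sq_nonneg (‖w‖ - p), mul_nonneg hp (show (0:ℝ) ≤ ‖w‖ + ‖z - w‖ - ‖z‖ by linarith)]
  · rw [if_neg (not_le.2 h1), if_neg (not_le.2 h2)]
    nlinarith [mul_nonneg hp (show (0:ℝ) ≤ ‖w‖ + ‖z - w‖ - ‖z‖ by linarith)]

variable (g : ℝ → ℝ → E → ℝ) (l c : ℝ → ℝ) (Cbar p : ℝ)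

lemma term_lower (hp : 0 ≤ p) (hc : ∀ t, 0 ≤ c t ∧ c t ≤ Cbar)
    (hlow : ∀ t y z, -(l t + c t * |y| + qcap p z) ≤ g t y z)
    (n t y : ℝ) (z : E) (u : ℝ) (w : E) :
    -(l t + c t * |y| + qcap p z) + (n - Cbar) * |y - u| + (n - p) * ‖z - w‖
      ≤ g t u w + n * |y - u| + n * ‖z - w‖ := by
  have h1 := hlow t u w
  have hq := qcap_lip hp w z
  rw [norm_sub_rev w z] at hq
  have h3 : |u| ≤ |y| + |y - u| := by
    have := abs_sub_abs_le_abs_sub u y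
    rw [abs_sub_comm u y] at this; linarith
  have h4 := mul_le_mul_of_nonneg_left h3 (hc t).1
  have h5 := mul_le_mul_of_nonneg_right (hc t).2 (abs_nonneg (y - u))
  nlinarith [abs_nonneg (y - u), norm_nonneg (z - w)]

lemma infConv_bddBelow (hp : 0 < p) (hc : ∀ t, 0 ≤ c t ∧ c t ≤ Cbar)
    (hlow : ∀ t y z, -(l t + c t * |y| + qcap p z) ≤ g t y z)
    {n : ℝ} (hn : max Cbar p ≤ n) (t y : ℝ) (z : E) :
    BddBelow (Set.range fun uw : ℝ × E =>
      g t uw.1 uw.2 + n * |y - uw.1| + n * ‖z - uw.2‖) := by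
  refine ⟨-(l t + c t * |y| + qcap p z), ?_⟩
  rintro x ⟨⟨u, w⟩, rfl⟩
  have h := term_lower g l c Cbar p hp.le hc hlow n t y z u w
  have hC : Cbar ≤ n := le_trans (le_max_left _ _) hn
  have hP : p ≤ n := le_trans (le_max_right _ _) hn
  have h1 := mul_nonneg (show (0:ℝ) ≤ n - Cbar by linarith) (abs_nonneg (y - u))
  have h2 := mul_nonneg (show (0:ℝ) ≤ n - p by linarith) (norm_nonneg (z - w))
  show -(l t + c t * |y| + qcap p z) ≤ g t u w + n * |y - u| + n * ‖z - w‖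
  linarith

lemma infConv_le (hp : 0 < p) (hc : ∀ t, 0 ≤ c t ∧ c t ≤ Cbar)
    (hlow : ∀ t y z, -(l t + c t * |y| + qcap p z) ≤ g t y z)
    {n : ℝ} (hn : max Cbar p ≤ n) (t y : ℝ) (z : E) (u : ℝ) (w : E) :
    infConvReg g n t y z ≤ g t u w + n * |y - u| + n * ‖z - w‖ := by
  rw [infConvReg]
  exact ciInf_le (infConv_bddBelow g l c Cbar p hp hc hlow hn t y z) (u, w)

lemma infConv_lower (hp : 0 < p) (hc : ∀ t, 0 ≤ c t ∧ c t ≤ Cbar)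
    (hlow : ∀ t y z, -(l t + c t * |y| + qcap p z) ≤ g t y z)
    {n : ℝ} (hn : max Cbar p ≤ n) (t y : ℝ) (z : E) :
    -(l t + c t * |y| + qcap p z) ≤ infConvReg g n t y z := by
  rw [infConvReg]
  refine le_ciInf fun uw => ?_
  have h := term_lower g l c Cbar p hp.le hc hlow n t y z uw.1 uw.2
  have hC : Cbar ≤ n := le_trans (le_max_left _ _) hn
  have hP : p ≤ n := le_trans (le_max_right _ _) hn
  have h1 := mul_nonneg (show (0:ℝ) ≤ n - Cbar by linarith) (abs_nonneg (y - uw.1))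
  have h2 := mul_nonneg (show (0:ℝ) ≤ n - p by linarith) (norm_nonneg (z - uw.2))
  linarith

lemma infConv_upper (hp : 0 < p) (hc : ∀ t, 0 ≤ c t ∧ c t ≤ Cbar)
    (hlow : ∀ t y z, -(l t + c t * |y| + qcap p z) ≤ g t y z)
    (hup : ∀ t y z, g t y z ≤ l t + c t * |y| + ‖z‖ ^ 2 / 2)
    {n : ℝ} (hn : max Cbar p ≤ n) (t y : ℝ) (z : E) :
    infConvReg g n t y z ≤ l t + c t * |y| + qcap n z := by
  have hP : p ≤ n := le_trans (le_max_right _ _) hn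
  have hn0 : (0:ℝ) ≤ n := le_trans hp.le hP
  rcases le_or_gt ‖z‖ n with h | h
  · have h1 := infConv_le g l c Cbar p hp hc hlow hn t y z y z
    have h2 := hup t y z
    rw [qcap, if_pos h]
    simp only [sub_self, abs_zero, norm_zero, mul_zero, add_zero] at h1
    linarith
  · have hz0 : 0 < ‖z‖ := lt_of_le_of_lt hn0 h
    set w : E := (n / ‖z‖) • z with hwdef
    have hw : ‖w‖ = n := by
      rw [hwdef, norm_smul, Real.norm_eq_abs, abs_of_nonneg (div_nonneg hn0 hz0.le),
        div_mul_cancel₀ _ hz0.ne']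
    have hzw : ‖z - w‖ = ‖z‖ - n := by
      have hzz : z - w = (1 - n / ‖z‖) • z := by rw [hwdef, sub_smul, one_smul]
      have hd : n / ‖z‖ ≤ 1 := (div_le_one hz0).2 h.le
      rw [hzz, norm_smul, Real.norm_eq_abs, abs_of_nonneg (by linarith), sub_mul, one_mul,
        div_mul_cancel₀ _ hz0.ne']
    have h1 := infConv_le g l c Cbar p hp hc hlow hn t y z y w
    have h2 := hup t y w
    rw [hw] at h2
    rw [qcap, if_neg (not_le.2 h)]
    simp only [sub_self, abs_zero, mul_zero, add_zero, hzw] at h1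
    nlinarith

end auxIC

/-- **Regularization by inf-convolution of a quadratic coefficient.**
Under the two-sided growth bound `-(l_t + c_t|y| + q_p(z)) ≤ g ≤ l_t + c_t|y| + |z|²/2`
with `0 ≤ l, c ≤ C̄`, the inf-convolutions `g_n` are, for `n ≥ max C̄ p`:
(i) `n`-Lipschitz in `(y,z)`; (ii) bounded by
`|g_n| ≤ l_t + c_t|y| + max (q_p z) (q_n z) ≤ l_t + c_t|y| + |z|²/2`;
(iii) nondecreasing in `n`; and (iv) `g_{n_k}(t, y_k, z_k) → g(t,y,z)` whenever
`n_k → ∞` and `(y_k, z_k) → (y,z)`. -/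
theorem inf_convolution_regularization {d : ℕ}
    (g : ℝ → ℝ → EuclideanSpace ℝ (Fin d) → ℝ)
    (l c : ℝ → ℝ) (Cbar p : ℝ) (hp : 0 < p)
    (hl : ∀ t, 0 ≤ l t ∧ l t ≤ Cbar) (hc : ∀ t, 0 ≤ c t ∧ c t ≤ Cbar)
    (hcont : ∀ t, Continuous fun yz : ℝ × EuclideanSpace ℝ (Fin d) => g t yz.1 yz.2)
    (hlow : ∀ t y z, -(l t + c t * |y| + qcap p z) ≤ g t y z)
    (hup : ∀ t y z, g t y z ≤ l t + c t * |y| + ‖z‖ ^ 2 / 2) :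
    (∀ n, max Cbar p ≤ n → ∀ t y y' (z z' : EuclideanSpace ℝ (Fin d)),
      |infConvReg g n t y z - infConvReg g n t y' z'| ≤ n * (|y - y'| + ‖z - z'‖)) ∧
    (∀ n, max Cbar p ≤ n → ∀ t y (z : EuclideanSpace ℝ (Fin d)),
      |infConvReg g n t y z| ≤ l t + c t * |y| + max (qcap p z) (qcap n z) ∧
        l t + c t * |y| + max (qcap p z) (qcap n z) ≤ l t + c t * |y| + ‖z‖ ^ 2 / 2) ∧
    (∀ n m, max Cbar p ≤ n → n ≤ m → ∀ t y (z : EuclideanSpace ℝ (Fin d)),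
      infConvReg g n t y z ≤ infConvReg g m t y z) ∧
    (∀ t y (z : EuclideanSpace ℝ (Fin d)) (nk : ℕ → ℝ) (yk : ℕ → ℝ)
        (zk : ℕ → EuclideanSpace ℝ (Fin d)),
      (∀ k, max Cbar p ≤ nk k) → Tendsto nk atTop atTop →
      Tendsto yk atTop (nhds y) → Tendsto zk atTop (nhds z) →
      Tendsto (fun k => infConvReg g (nk k) t (yk k) (zk k)) atTop (nhds (g t y z))) := by
  have key : ∀ n, max Cbar p ≤ n → ∀ t y y' (z z' : EuclideanSpace ℝ (Fin d)),
      infConvReg g n t y z ≤ infConvReg g n t y' z' + n * (|y - y'| + ‖z - z'‖) := by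
    intro n hn t y y' z z'
    have hn0 : (0:ℝ) ≤ n := le_trans hp.le (le_trans (le_max_right _ _) hn)
    have h2 : infConvReg g n t y z - n * (|y - y'| + ‖z - z'‖) ≤ infConvReg g n t y' z' := by
      rw [infConvReg]
      refine le_ciInf fun uw => ?_
      have h1 := infConv_le g l c Cbar p hp hc hlow hn t y z uw.1 uw.2
      rw [infConvReg] at h1
      have h3 : |y - uw.1| ≤ |y - y'| + |y' - uw.1| := abs_sub_le y y' uw.1
      have h4 : ‖z - uw.2‖ ≤ ‖z - z'‖ + ‖z' - uw.2‖ := by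
        have := dist_triangle z z' uw.2
        simpa [dist_eq_norm] using this
      have h5 := mul_le_mul_of_nonneg_left h3 hn0
      have h6 := mul_le_mul_of_nonneg_left h4 hn0
      nlinarith
    linarith
  refine ⟨?_, ?_, ?_, ?_⟩
  · -- (i) Lipschitz
    intro n hn t y y' z z'
    rw [abs_le]
    constructor
    · have h := key n hn t y' y z' z
      rw [abs_sub_comm y' y, norm_sub_rev z' z] at h
      linarith
    · have h := key n hn t y y' z z'
      linarith
  · -- (ii) bounds
    intro n hn t y z
    have hP : p ≤ n := le_trans (le_max_right _ _) hn
    have hn0 : (0:ℝ) ≤ n := le_trans hp.le hP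
    constructor
    · rw [abs_le]
      constructor
      · have h := infConv_lower g l c Cbar p hp hc hlow hn t y z
        have := le_max_left (qcap p z) (qcap n z)
        linarith
      · have h := infConv_upper g l c Cbar p hp hc hlow hup hn t y z
        have := le_max_right (qcap p z) (qcap n z)
        linarith
    · have h1 := qcap_le_half_sq hp.le z
      have h2 := qcap_le_half_sq hn0 z
      have := max_le h1 h2
      linarith
  · -- (iii) monotone
    intro n m hn hnm t y z
    rw [infConvReg, infConvReg]
    refine ciInf_mono (infConv_bddBelow g l c Cbar p hp hc hlow hn t y z) fun uw => ?_
    have h1 := mul_le_mul_of_nonneg_right hnm (abs_nonneg (y - uw.1))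
    have h2 := mul_le_mul_of_nonneg_right hnm (norm_nonneg (z - uw.2))
    linarith
  · -- (iv) convergence
    intro t y z nk yk zk hnk hnkT hyk hzk
    have hPn : ∀ k, p ≤ nk k := fun k => le_trans (le_max_right _ _) (hnk k)
    have hn0 : ∀ k, (0:ℝ) ≤ nk k := fun k => le_trans hp.le (hPn k)
    have hub : ∀ k, infConvReg g (nk k) t (yk k) (zk k) ≤ g t (yk k) (zk k) := by
      intro k
      have h := infConv_le g l c Cbar p hp hc hlow (hnk k) t (yk k) (zk k) (yk k) (zk k)
      simpa using h
    have hex : ∀ k : ℕ, ∃ uw : ℝ × EuclideanSpace ℝ (Fin d),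
        g t uw.1 uw.2 + nk k * |yk k - uw.1| + nk k * ‖zk k - uw.2‖
          < infConvReg g (nk k) t (yk k) (zk k) + 1/((k:ℝ)+1) := by
      intro k
      have h0 : infConvReg g (nk k) t (yk k) (zk k)
          < infConvReg g (nk k) t (yk k) (zk k) + 1/((k:ℝ)+1) := by
        have : (0:ℝ) < 1/((k:ℝ)+1) := by positivity
        linarith
      rw [infConvReg] at h0
      exact exists_lt_of_ciInf_lt h0
    choose uw huw using hex
    have hlow' : ∀ k, g t (uw k).1 (uw k).2 - 1/((k:ℝ)+1)
        ≤ infConvReg g (nk k) t (yk k) (zk k) := by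
      intro k
      have h := huw k
      have h1 := mul_nonneg (hn0 k) (abs_nonneg (yk k - (uw k).1))
      have h2 := mul_nonneg (hn0 k) (norm_nonneg (zk k - (uw k).2))
      linarith
    set N := max Cbar p with hN
    have hDb : ∀ k, (nk k - N) * (|yk k - (uw k).1| + ‖zk k - (uw k).2‖)
        ≤ g t (yk k) (zk k) + 1/((k:ℝ)+1) + l t + c t * |yk k| + p * ‖zk k‖ := by
      intro k
      have h := term_lower g l c Cbar p hp.le hc hlow (nk k) t (yk k) (zk k) (uw k).1 (uw k).2
      have h2 := (huw k).le
      have h3 := hub k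
      have h4 : qcap p (zk k) ≤ p * ‖zk k‖ := qcap_le_mul hp.le _
      have h5 : (nk k - N) * |yk k - (uw k).1| ≤ (nk k - Cbar) * |yk k - (uw k).1| :=
        mul_le_mul_of_nonneg_right (by have := le_max_left Cbar p; rw [hN]; linarith)
          (abs_nonneg _)
      have h6 : (nk k - N) * ‖zk k - (uw k).2‖ ≤ (nk k - p) * ‖zk k - (uw k).2‖ :=
        mul_le_mul_of_nonneg_right (by have := le_max_right Cbar p; rw [hN]; linarith)
          (norm_nonneg _)
      nlinarith
    have hg : Tendsto (fun k => g t (yk k) (zk k)) atTop (nhds (g t y z)) :=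
      ((hcont t).tendsto (y, z)).comp (hyk.prodMk_nhds hzk)
    have h1div : Tendsto (fun k : ℕ => 1/((k:ℝ)+1)) atTop (nhds 0) :=
      tendsto_one_div_add_atTop_nhds_zero_nat
    have hBtend : Tendsto
        (fun k : ℕ => g t (yk k) (zk k) + 1/((k:ℝ)+1) + l t + c t * |yk k| + p * ‖zk k‖)
        atTop (nhds (g t y z + 0 + l t + c t * |y| + p * ‖z‖)) :=
      (((hg.add h1div).add tendsto_const_nhds).add ((hyk.abs).const_mul (c t))).add
        ((hzk.norm).const_mul p)
    have hnN : Tendsto (fun k => nk k - N) atTop atTop := by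
      simpa [sub_eq_add_neg] using tendsto_atTop_add_const_right atTop (-N) hnkT
    have hquot : Tendsto (fun k : ℕ =>
        (g t (yk k) (zk k) + 1/((k:ℝ)+1) + l t + c t * |yk k| + p * ‖zk k‖) / (nk k - N))
        atTop (nhds 0) := hBtend.div_atTop hnN
    have hD : Tendsto (fun k => |yk k - (uw k).1| + ‖zk k - (uw k).2‖) atTop (nhds 0) := by
      refine tendsto_of_tendsto_of_tendsto_of_le_of_le' tendsto_const_nhds hquot ?_ ?_
      · exact Eventually.of_forall fun k => add_nonneg (abs_nonneg _) (norm_nonneg _)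
      · filter_upwards [hnkT.eventually_ge_atTop (N + 1)] with k hk
        have hpos : 0 < nk k - N := by linarith
        rw [le_div_iff₀ hpos]
        have := hDb k
        nlinarith
    have hu : Tendsto (fun k => (uw k).1) atTop (nhds y) := by
      have h1 : Tendsto (fun k => yk k - (uw k).1) atTop (nhds 0) := by
        refine squeeze_zero_norm (fun k => ?_) hD
        rw [Real.norm_eq_abs]
        exact le_add_of_nonneg_right (norm_nonneg _)
      have := hyk.sub h1
      simpa using this
    have hw : Tendsto (fun k => (uw k).2) atTop (nhds z) := by
      have h1 : Tendsto (fun k => zk k - (uw k).2) atTop (nhds 0) := by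
        refine squeeze_zero_norm (fun k => ?_) hD
        exact le_add_of_nonneg_left (abs_nonneg _)
      have := hzk.sub h1
      simpa using this
    have hguw : Tendsto (fun k => g t (uw k).1 (uw k).2) atTop (nhds (g t y z)) :=
      ((hcont t).tendsto (y, z)).comp (hu.prodMk_nhds hw)
    have hlowtend : Tendsto (fun k => g t (uw k).1 (uw k).2 - 1/((k:ℝ)+1)) atTop
        (nhds (g t y z)) := by
      have := hguw.sub h1div
      simpa using this
    exact tendsto_of_tendsto_of_tendsto_of_le_of_le hlowtend hg hlow' hub
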